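/- For probability measures ν ≪ μ, the relative entropy equals the supremum over bounded continuous functions f of ∫ f dν - log ∫ e^f dμ: H(ν|μ) = sup_f [∫ f dν - log ∫ e^f dμ]. -/

import Mathlib

open MeasureTheory Real Filter

lemma dv_aux_exp_lipschitz (a b : ℝ) :
    |Real.exp a - Real.exp b| ≤ Real.exp (max a b) * |a - b| := by
  wlog h : b ≤ a generalizing a b
  · rw [abs_sub_comm, abs_sub_comm a b, max_comm]
    exact this b a (le_of_not_ge h)
  rw [abs_of_nonneg (sub_nonneg.2 (Real.exp_le_exp.2 h)), abs_of_nonneg (sub_nonneg.2 h),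
    max_eq_left h]
  have h1 := Real.add_one_le_exp (b - a)
  have h2 : Real.exp a * Real.exp (b - a) = Real.exp b := by rw [← Real.exp_add]; ring_nf
  nlinarith [Real.exp_pos a]

lemma dv_clamp_lipschitz (M a b : ℝ) :
    |max (min a M) (-M) - max (min b M) (-M)| ≤ |a - b| := by
  refine (abs_max_sub_max_le_abs _ _ _).trans ?_
  have := abs_min_sub_min_le_max a M b M
  simpa using this

lemma dv_integrable_of_bounded {X : Type*} [MeasurableSpace X] (μ : Measure X)
    [IsFiniteMeasure μ] {h : X → ℝ} (hm : AEStronglyMeasurable h μ) {C : ℝ}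
    (hb : ∀ x, |h x| ≤ C) : Integrable h μ :=
  Integrable.mono' (integrable_const C) hm
    (Filter.Eventually.of_forall (by simpa [Real.norm_eq_abs] using hb))

lemma dv_integral_exp_pos {X : Type*} [MeasurableSpace X] (μ : Measure X)
    [IsProbabilityMeasure μ] {f : X → ℝ} (hf : Integrable (fun x => Real.exp (f x)) μ) :
    0 < ∫ x, Real.exp (f x) ∂μ := by
  rw [integral_pos_iff_support_of_nonneg (fun x => (Real.exp_pos _).le) hf]
  have : Function.support (fun x => Real.exp (f x)) = Set.univ := by
    ext x; simp [Function.support, (Real.exp_pos (f x)).ne']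
  rw [this]; simp

/-- Gibbs inequality -/
lemma dv_gibbs {X : Type*} [MeasurableSpace X] (μ ν : Measure X)
    [IsProbabilityMeasure μ] [IsProbabilityMeasure ν] (hac : ν ≪ μ)
    (hint : Integrable (fun x => Real.log ((ν.rnDeriv μ x).toReal)) ν)
    {f : X → ℝ} (hfm : Measurable f) (hfν : Integrable f ν)
    (hfμ : Integrable (fun x => Real.exp (f x)) μ) :
    ∫ x, f x ∂ν - Real.log (∫ x, Real.exp (f x) ∂μ) ≤
      ∫ x, Real.log ((ν.rnDeriv μ x).toReal) ∂ν := by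
  set g : X → ℝ := fun x => (ν.rnDeriv μ x).toReal with hg
  have hgm : Measurable g := (Measure.measurable_rnDeriv ν μ).ennreal_toReal
  set u : X → ℝ := fun x => f x - Real.log (g x) with hu
  have hum : Measurable u := hfm.sub (Real.measurable_log.comp hgm)
  have huν : Integrable u ν := hfν.sub hint
  have hkey : ∀ x, g x • Real.exp (u x) ≤ Real.exp (f x) := by
    intro x
    rcases eq_or_lt_of_le (ENNReal.toReal_nonneg : (0:ℝ) ≤ g x) with h0 | h0
    · simp only [smul_eq_mul, hg, ← h0, zero_mul]
      exact (Real.exp_pos _).le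
    · have : Real.exp (u x) = Real.exp (f x) / g x := by
        rw [hu, Real.exp_sub, Real.exp_log h0]
      rw [this, smul_eq_mul, mul_div_cancel₀ _ h0.ne']
  have hkeym : Measurable fun x => g x • Real.exp (u x) :=
    hgm.smul (Real.measurable_exp.comp hum)
  have hgeu : Integrable (fun x => g x • Real.exp (u x)) μ :=
    Integrable.mono' hfμ hkeym.aestronglyMeasurable
      (Filter.Eventually.of_forall fun x => by
        simp only [Real.norm_eq_abs, smul_eq_mul]
        rw [abs_of_nonneg (mul_nonneg ENNReal.toReal_nonneg (Real.exp_pos _).le)]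
        simpa using hkey x)
  have heuν : Integrable (fun x => Real.exp (u x)) ν :=
    (integrable_rnDeriv_smul_iff hac).mp hgeu
  have hjensen : Real.exp (∫ x, u x ∂ν) ≤ ∫ x, Real.exp (u x) ∂ν := by
    have := convexOn_exp.map_integral_le (μ := ν) (f := u)
      Real.continuous_exp.continuousOn isClosed_univ
      (Filter.Eventually.of_forall fun x => Set.mem_univ _) huν heuν
    simpa using this
  have hchange : ∫ x, Real.exp (u x) ∂ν = ∫ x, g x • Real.exp (u x) ∂μ :=
    (integral_rnDeriv_smul hac (f := fun x => Real.exp (u x))).symm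
  have hle : ∫ x, Real.exp (u x) ∂ν ≤ ∫ x, Real.exp (f x) ∂μ := by
    rw [hchange]
    exact integral_mono hgeu hfμ hkey
  have hpos : 0 < ∫ x, Real.exp (f x) ∂μ := dv_integral_exp_pos μ hfμ
  have h2 : ∫ x, u x ∂ν ≤ Real.log (∫ x, Real.exp (f x) ∂μ) := by
    rw [Real.le_log_iff_exp_le hpos]
    exact hjensen.trans hle
  have h3 : ∫ x, u x ∂ν = ∫ x, f x ∂ν - ∫ x, Real.log (g x) ∂ν :=
    integral_sub hfν hint
  linarith [h2, h3.symm.le]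

/-- Donsker–Varadhan variational formula: on a compact metrizable space, for
probability measures `ν ≪ μ`, the relative entropy equals the supremum over
(bounded) continuous functions `f` of `∫ f dν - log ∫ e^f dμ`. -/
theorem relativeEntropy_eq_iSup_donsker_varadhan
    {X : Type*} [TopologicalSpace X] [CompactSpace X] [TopologicalSpace.MetrizableSpace X]
    [MeasurableSpace X] [BorelSpace X]
    (μ ν : Measure X) [IsProbabilityMeasure μ] [IsProbabilityMeasure ν]
    (hac : ν ≪ μ)
    (hint : Integrable (fun x => Real.log ((ν.rnDeriv μ x).toReal)) ν) :
    ∫ x, Real.log ((ν.rnDeriv μ x).toReal) ∂ν =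
      ⨆ f : C(X, ℝ), (∫ x, f x ∂ν - Real.log (∫ x, Real.exp (f x) ∂μ)) := by
  set g : X → ℝ := fun x => (ν.rnDeriv μ x).toReal with hg
  have hgm : Measurable g := (Measure.measurable_rnDeriv ν μ).ennreal_toReal
  set L : X → ℝ := fun x => Real.log (g x) with hL
  set H : ℝ := ∫ x, L x ∂ν with hH
  -- every term is ≤ H
  have hterm_le : ∀ f : C(X, ℝ),
      ∫ x, f x ∂ν - Real.log (∫ x, Real.exp (f x) ∂μ) ≤ H := by
    intro f
    set fb := BoundedContinuousFunction.mkOfCompact f with hfb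
    have hbd : ∀ x, |f x| ≤ ‖fb‖ := fun x => by
      simpa [Real.norm_eq_abs, hfb] using fb.norm_coe_le_norm x
    have hfν : Integrable (fun x => f x) ν :=
      dv_integrable_of_bounded ν f.continuous.aestronglyMeasurable hbd
    have hfμ : Integrable (fun x => Real.exp (f x)) μ :=
      dv_integrable_of_bounded μ
        (Real.continuous_exp.comp f.continuous).aestronglyMeasurable
        (C := Real.exp ‖fb‖) (fun x => by
          rw [abs_of_nonneg (Real.exp_pos _).le]
          exact Real.exp_le_exp.2 ((le_abs_self _).trans (hbd x)))
    exact dv_gibbs μ ν hac hint f.continuous.measurable hfν hfμ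
  have hne : Nonempty C(X, ℝ) := ⟨ContinuousMap.const X 0⟩
  have hbdd : BddAbove (Set.range fun f : C(X, ℝ) =>
      ∫ x, f x ∂ν - Real.log (∫ x, Real.exp (f x) ∂μ)) :=
    ⟨H, by rintro y ⟨f, rfl⟩; exact hterm_le f⟩
  refine le_antisymm ?_ (ciSup_le hterm_le)
  -- lower bound: H ≤ sup
  refine le_of_forall_pos_le_add fun ε hε => ?_
  -- truncations
  set φ : ℕ → X → ℝ :=
    fun n x => Real.log (max (min (g x) (Real.exp n)) (Real.exp (-(n:ℝ)))) with hφ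
  have hφm : ∀ n, Measurable (φ n) := fun n =>
    Real.measurable_log.comp ((hgm.min measurable_const).max measurable_const)
  have hclamp_pos : ∀ (n : ℕ) (x : X),
      0 < max (min (g x) (Real.exp n)) (Real.exp (-(n:ℝ))) := fun n x =>
    lt_max_of_lt_right (Real.exp_pos _)
  have hexpφ : ∀ n x, Real.exp (φ n x) = max (min (g x) (Real.exp n)) (Real.exp (-(n:ℝ))) :=
    fun n x => Real.exp_log (hclamp_pos n x)
  have hφ_bd : ∀ (n : ℕ) (x : X), |φ n x| ≤ (n : ℝ) := by
    intro n x
    rw [abs_le]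
    constructor
    · have : Real.exp (-(n:ℝ)) ≤ max (min (g x) (Real.exp n)) (Real.exp (-(n:ℝ))) :=
        le_max_right _ _
      calc -(n:ℝ) = Real.log (Real.exp (-(n:ℝ))) := (Real.log_exp _).symm
        _ ≤ φ n x := Real.log_le_log (Real.exp_pos _) this
    · have h1 : max (min (g x) (Real.exp n)) (Real.exp (-(n:ℝ))) ≤ Real.exp n :=
        max_le (min_le_right _ _) (Real.exp_le_exp.2 (neg_le_self (Nat.cast_nonneg n)))
      calc φ n x ≤ Real.log (Real.exp n) := Real.log_le_log (hclamp_pos n x) h1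
        _ = n := Real.log_exp _
  -- domination: |φ n x| ≤ |L x| whenever 0 < g x
  have hφ_dom : ∀ (n : ℕ) (x : X), 0 < g x → |φ n x| ≤ |L x| := by
    intro n x hgx
    have hen : (1:ℝ) ≤ Real.exp (n:ℝ) := Real.one_le_exp (by positivity)
    have hen' : Real.exp (-(n:ℝ)) ≤ 1 := Real.exp_le_one_iff.2 (by simp)
    set c := max (min (g x) (Real.exp n)) (Real.exp (-(n:ℝ))) with hc
    rcases le_or_gt 1 (g x) with h1 | h1
    · have hmin : (1:ℝ) ≤ min (g x) (Real.exp n) := le_min h1 hen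
      have hceq : c = min (g x) (Real.exp n) := max_eq_left (hen'.trans hmin)
      have hc1 : (1:ℝ) ≤ c := hceq ▸ hmin
      have hcg : c ≤ g x := hceq ▸ min_le_left _ _
      rw [abs_of_nonneg (Real.log_nonneg hc1), abs_of_nonneg (Real.log_nonneg h1)]
      exact Real.log_le_log (lt_of_lt_of_le one_pos hc1) hcg
    · have hmin : min (g x) (Real.exp n) = g x := min_eq_left (h1.le.trans hen)
      have hcg : g x ≤ c := hmin ▸ le_max_left _ _
      have hc1 : c ≤ 1 := max_le (by rw [hmin]; exact h1.le) hen'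
      rw [abs_of_nonpos (Real.log_nonpos (hclamp_pos n x).le hc1),
        abs_of_nonpos (Real.log_nonpos hgx.le h1.le)]
      simp only [neg_le_neg_iff]
      exact Real.log_le_log hgx hcg
  -- a.e. positivity and finiteness of rnDeriv
  have hgpos : ∀ᵐ x ∂ν, 0 < g x := by
    filter_upwards [Measure.rnDeriv_pos hac,
      (Measure.rnDeriv_ne_top ν μ).filter_mono hac.ae_le] with x h1 h2
    exact ENNReal.toReal_pos h1.ne' h2
  -- pointwise convergence
  have hφ_tendsto : ∀ᵐ x ∂ν, Tendsto (fun n => φ n x) atTop (nhds (L x)) := by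
    filter_upwards [hgpos] with x hgx
    obtain ⟨N, hN⟩ := exists_nat_ge |Real.log (g x)|
    apply tendsto_atTop_of_eventually_const (i₀ := N)
    intro n hn
    have hNn : |Real.log (g x)| ≤ (n : ℝ) := hN.trans (Nat.cast_le.2 hn)
    have h1 : g x ≤ Real.exp (n:ℝ) := by
      rw [← Real.exp_log hgx]
      exact Real.exp_le_exp.2 ((le_abs_self _).trans hNn)
    have h2 : Real.exp (-(n:ℝ)) ≤ g x := by
      rw [← Real.exp_log hgx]
      exact Real.exp_le_exp.2 (by
        have := (neg_abs_le (Real.log (g x))).trans (le_refl _)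
        linarith [neg_abs_le (Real.log (g x))])
    simp only [hφ, min_eq_left h1, max_eq_left h2, hL]
  -- dominated convergence
  have hLint : Integrable (fun x => |L x|) ν := hint.abs
  have hφint : ∀ n, Integrable (φ n) ν := fun n =>
    dv_integrable_of_bounded ν (hφm n).aestronglyMeasurable (hφ_bd n)
  have hDCT : Tendsto (fun n => ∫ x, φ n x ∂ν) atTop (nhds H) := by
    refine tendsto_integral_of_dominated_convergence (fun x => |L x|)
      (fun n => (hφm n).aestronglyMeasurable) hLint (fun n => ?_) hφ_tendsto
    filter_upwards [hgpos] with x hgx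
    simpa [Real.norm_eq_abs] using hφ_dom n x hgx
  -- choose n
  have hexp0 : Tendsto (fun n : ℕ => Real.exp (-(n:ℝ))) atTop (nhds 0) :=
    Real.tendsto_exp_neg_atTop_nhds_zero.comp tendsto_natCast_atTop_atTop
  have hev1 : ∀ᶠ n : ℕ in atTop, H - ε / 4 < ∫ x, φ n x ∂ν :=
    hDCT.eventually (eventually_gt_nhds (by linarith))
  have hev2 : ∀ᶠ n : ℕ in atTop, Real.exp (-(n:ℝ)) < ε / 16 :=
    hexp0.eventually (eventually_lt_nhds (by linarith))
  obtain ⟨n, hn1, hn2⟩ := (hev1.and hev2).exists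
  set M : ℝ := (n : ℝ) with hM
  have hM0 : 0 ≤ M := Nat.cast_nonneg n
  set δ : ℝ := min (ε / 4) (Real.exp (-2 * M)) with hδ
  have hδ0 : 0 < δ := lt_min (by linarith) (Real.exp_pos _)
  -- approximate φ n in L¹(μ + ν)
  have hφν : Integrable (φ n) (μ + ν) := by
    refine dv_integrable_of_bounded _ (hφm n).aestronglyMeasurable (hφ_bd n)
  obtain ⟨f0, hf0, hf0int⟩ :=
    hφν.exists_boundedContinuous_integral_sub_le hδ0
  -- the continuous candidate
  set f : C(X, ℝ) := ⟨fun x => max (min (f0 x) M) (-M),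
    (f0.continuous.min continuous_const).max continuous_const⟩ with hf
  have hfbd : ∀ x, |f x| ≤ M := by
    intro x
    rw [abs_le]
    exact ⟨le_max_right _ _, max_le ((min_le_right _ _).trans le_rfl)
      (neg_le_self hM0)⟩
  have hfφ : ∀ x, |f x - φ n x| ≤ |f0 x - φ n x| := by
    intro x
    have hφx : φ n x = max (min (φ n x) M) (-M) := by
      have h1 := hφ_bd n x
      rw [abs_le] at h1
      rw [min_eq_left h1.2, max_eq_left h1.1]
    calc |f x - φ n x| = |max (min (f0 x) M) (-M) - max (min (φ n x) M) (-M)| := by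
          rw [← hφx]; rfl
      _ ≤ |f0 x - φ n x| := dv_clamp_lipschitz M _ _
  -- integrability of everything
  have hfm : Measurable (⇑f) := f.continuous.measurable
  have hfνint : Integrable (fun x => f x) ν :=
    dv_integrable_of_bounded ν f.continuous.aestronglyMeasurable hfbd
  have hfμint : Integrable (fun x => f x) μ :=
    dv_integrable_of_bounded μ f.continuous.aestronglyMeasurable hfbd
  have hφμint : Integrable (φ n) μ :=
    dv_integrable_of_bounded μ (hφm n).aestronglyMeasurable (hφ_bd n)
  have hsubν : Integrable (fun x => |f x - φ n x|) ν := (hfνint.sub (hφint n)).abs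
  have hsubμ : Integrable (fun x => |f x - φ n x|) μ := (hfμint.sub hφμint).abs
  -- closeness in each measure
  have hsplit : ∫ x, ‖φ n x - f0 x‖ ∂μ + ∫ x, ‖φ n x - f0 x‖ ∂ν ≤ δ := by
    rw [← integral_add_measure]
    · exact hf0
    · exact ((integrable_add_measure.mp (hφν.sub hf0int)).1).norm
    · exact ((integrable_add_measure.mp (hφν.sub hf0int)).2).norm
  have hnorm_nonneg : ∀ (m : Measure X), 0 ≤ ∫ x, ‖φ n x - f0 x‖ ∂m := fun m =>
    integral_nonneg fun x => norm_nonneg _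
  have hcloseν : ∫ x, |f x - φ n x| ∂ν ≤ δ := by
    have h1 : ∫ x, |f x - φ n x| ∂ν ≤ ∫ x, ‖φ n x - f0 x‖ ∂ν := by
      refine integral_mono hsubν ((integrable_add_measure.mp (hφν.sub hf0int)).2).norm
        fun x => ?_
      rw [Real.norm_eq_abs, abs_sub_comm (φ n x)]
      exact hfφ x
    linarith [hnorm_nonneg μ]
  have hcloseμ : ∫ x, |f x - φ n x| ∂μ ≤ δ := by
    have h1 : ∫ x, |f x - φ n x| ∂μ ≤ ∫ x, ‖φ n x - f0 x‖ ∂μ := by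
      refine integral_mono hsubμ ((integrable_add_measure.mp (hφν.sub hf0int)).1).norm
        fun x => ?_
      rw [Real.norm_eq_abs, abs_sub_comm (φ n x)]
      exact hfφ x
    linarith [hnorm_nonneg ν]
  -- ∫ f dν is close to ∫ φ n dν
  have hintν_close : |∫ x, f x ∂ν - ∫ x, φ n x ∂ν| ≤ δ := by
    rw [← integral_sub hfνint (hφint n)]
    refine le_trans ?_ hcloseν
    simpa [Real.norm_eq_abs] using
      norm_integral_le_integral_norm (μ := ν) (fun x => f x - φ n x)
  -- bound ∫ e^φ dμ
  have hgint : Integrable g μ := Measure.integrable_toReal_rnDeriv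
  have hgone : ∫ x, g x ∂μ = 1 := by
    rw [hg, Measure.integral_toReal_rnDeriv hac]
    simp
  have hexpφint : Integrable (fun x => Real.exp (φ n x)) μ :=
    dv_integrable_of_bounded μ
      (Real.measurable_exp.comp (hφm n)).aestronglyMeasurable
      (C := Real.exp M) fun x => by
        rw [abs_of_nonneg (Real.exp_pos _).le]
        exact Real.exp_le_exp.2 ((le_abs_self _).trans (hφ_bd n x))
  have hexpφ_le : ∫ x, Real.exp (φ n x) ∂μ ≤ 1 + Real.exp (-M) := by
    have : ∀ x, Real.exp (φ n x) ≤ g x + Real.exp (-M) := by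
      intro x
      rw [hexpφ n x]
      refine max_le ((min_le_left _ _).trans (le_add_of_nonneg_right (Real.exp_pos _).le)) ?_
      have : (0:ℝ) ≤ g x := ENNReal.toReal_nonneg
      linarith
    calc ∫ x, Real.exp (φ n x) ∂μ ≤ ∫ x, (g x + Real.exp (-M)) ∂μ :=
          integral_mono hexpφint (hgint.add (integrable_const _)) this
      _ = 1 + Real.exp (-M) := by
          rw [integral_add hgint (integrable_const _), hgone, integral_const]
          simp
  -- bound ∫ e^f dμ
  have hexpfint : Integrable (fun x => Real.exp (f x)) μ :=
    dv_integrable_of_bounded μ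
      (Real.continuous_exp.comp f.continuous).aestronglyMeasurable
      (C := Real.exp M) fun x => by
        rw [abs_of_nonneg (Real.exp_pos _).le]
        exact Real.exp_le_exp.2 ((le_abs_self _).trans (hfbd x))
  have hexpf_le : ∫ x, Real.exp (f x) ∂μ ≤ 1 + 2 * Real.exp (-M) := by
    have hdiff : ∀ x, Real.exp (f x) - Real.exp (φ n x) ≤ Real.exp M * |f x - φ n x| := by
      intro x
      have h1 := dv_aux_exp_lipschitz (f x) (φ n x)
      have h2 : max (f x) (φ n x) ≤ M := by
        refine max_le ?_ ?_
        · exact (le_abs_self _).trans (hfbd x)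
        · exact (le_abs_self _).trans (hφ_bd n x)
      have h3 : Real.exp (max (f x) (φ n x)) ≤ Real.exp M := Real.exp_le_exp.2 h2
      have h4 : Real.exp (f x) - Real.exp (φ n x) ≤ |Real.exp (f x) - Real.exp (φ n x)| :=
        le_abs_self _
      nlinarith [abs_nonneg (f x - φ n x)]
    have h5 : ∫ x, Real.exp (f x) ∂μ - ∫ x, Real.exp (φ n x) ∂μ ≤
        Real.exp M * ∫ x, |f x - φ n x| ∂μ := by
      rw [← integral_sub hexpfint hexpφint, ← integral_const_mul]
      exact integral_mono (hexpfint.sub hexpφint) (hsubμ.const_mul _) hdiff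
    have h6 : Real.exp M * ∫ x, |f x - φ n x| ∂μ ≤ Real.exp M * Real.exp (-2 * M) := by
      refine mul_le_mul_of_nonneg_left (hcloseμ.trans (min_le_right _ _)) (Real.exp_pos _).le
    have h7 : Real.exp M * Real.exp (-2 * M) = Real.exp (-M) := by
      rw [← Real.exp_add]; ring_nf
    linarith [hexpφ_le]
  have hexpf_pos : 0 < ∫ x, Real.exp (f x) ∂μ := dv_integral_exp_pos μ hexpfint
  have hlog_le : Real.log (∫ x, Real.exp (f x) ∂μ) ≤ 2 * Real.exp (-M) := by
    calc Real.log (∫ x, Real.exp (f x) ∂μ) ≤ ∫ x, Real.exp (f x) ∂μ - 1 :=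
          Real.log_le_sub_one_of_pos hexpf_pos
      _ ≤ 2 * Real.exp (-M) := by linarith
  -- conclusion
  have hδε : δ ≤ ε / 4 := min_le_left _ _
  have hterm : H - ε ≤ ∫ x, f x ∂ν - Real.log (∫ x, Real.exp (f x) ∂μ) := by
    have h1 : ∫ x, φ n x ∂ν - δ ≤ ∫ x, f x ∂ν := by
      have := abs_le.mp hintν_close
      linarith [this.1]
    have h2 : 2 * Real.exp (-M) ≤ ε / 8 := by
      have : Real.exp (-M) < ε / 16 := by
        simpa [hM] using hn2
      linarith
    linarith [hn1, hlog_le]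
  calc H ≤ (∫ x, f x ∂ν - Real.log (∫ x, Real.exp (f x) ∂μ)) + ε := by linarith
    _ ≤ (⨆ f : C(X, ℝ), (∫ x, f x ∂ν - Real.log (∫ x, Real.exp (f x) ∂μ))) + ε := by
        exact add_le_add_left (le_ciSup hbdd f) ε
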